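/- Let n ∈ ℕ, n ≥ 1, let i, j, k be distinct indices in {1,2,3,4}, and let Q₁, Q₂, Q₃ ∈ ℝ[x₁,x₂,x₃,x₄] be nonzero polynomials such that Q₁·xᵢⁿ + Q₂·xⱼⁿ + Q₃·x_kⁿ is the zero polynomial. Then there exist polynomials A, B, C ∈ ℝ[x₁,x₂,x₃,x₄] such that Q₁ = A·xⱼⁿ + B·x_kⁿ, Q₂ = −A·xᵢⁿ + C·x_kⁿ and Q₃ = −B·xᵢⁿ − C·xⱼⁿ. -/

import Mathlib

open MvPolynomial

/-- If `P * X i ^ n` is divisible by `X j ^ n` (as a monomial) with `i ≠ j`,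
then `P` itself is divisible by the monomial `X j ^ n`. -/
lemma aux_dvd_of_mul {n : ℕ} {i j : Fin 4} (hij : i ≠ j)
    {P W : MvPolynomial (Fin 4) ℝ}
    (h : P * X i ^ n = monomial (Finsupp.single j n) (1 : ℝ) * W) :
    monomial (Finsupp.single j n) (1 : ℝ) ∣ P := by
  rw [monomial_one_dvd_iff_modMonomial_eq_zero]
  ext m
  by_cases hm : Finsupp.single j n ≤ m
  · simp [coeff_modMonomial_of_le _ hm]
  · rw [coeff_modMonomial_of_not_le _ hm, coeff_zero]
    have hc := congrArg (coeff (m + Finsupp.single i n)) h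
    rw [X_pow_eq_monomial, coeff_mul_monomial', if_pos le_add_self,
      add_tsub_cancel_right, coeff_monomial_mul', if_neg, mul_one] at hc
    · exact hc
    · intro hle
      apply hm
      intro x
      have := hle x
      by_cases hx : x = j
      · subst hx
        simpa [Finsupp.single_eq_of_ne' hij] using this
      · simp [Finsupp.single_eq_of_ne' (Ne.symm hx)]

/-- A polynomial divisible by `monomial s 1` all of whose coefficients at
multidegrees `≥ s` vanish is zero. -/
lemma aux_zero {s : Fin 4 →₀ ℕ} {D : MvPolynomial (Fin 4) ℝ}
    (hdvd : ∃ W, D = monomial s (1 : ℝ) * W)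
    (hc : ∀ m, s ≤ m → coeff m D = 0) : D = 0 := by
  obtain ⟨W, hW⟩ := hdvd
  ext m
  by_cases hm : s ≤ m
  · simpa using hc m hm
  · rw [hW, coeff_monomial_mul', if_neg hm, coeff_zero]

theorem stmt_12 (n : ℕ) (hn : 1 ≤ n) (i j k : Fin 4)
    (hij : i ≠ j) (hik : i ≠ k) (hjk : j ≠ k)
    (Q₁ Q₂ Q₃ : MvPolynomial (Fin 4) ℝ)
    (h₁ : Q₁ ≠ 0) (h₂ : Q₂ ≠ 0) (h₃ : Q₃ ≠ 0)
    (h : Q₁ * X i ^ n + Q₂ * X j ^ n + Q₃ * X k ^ n = 0) :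
    ∃ A B C' : MvPolynomial (Fin 4) ℝ,
      Q₁ = A * X j ^ n + B * X k ^ n ∧
      Q₂ = -A * X i ^ n + C' * X k ^ n ∧
      Q₃ = -B * X i ^ n - C' * X j ^ n := by
  set s : Fin 4 →₀ ℕ := Finsupp.single k n with hs
  have hmonk : (X k : MvPolynomial (Fin 4) ℝ) ^ n = monomial s 1 := X_pow_eq_monomial
  set B : MvPolynomial (Fin 4) ℝ := Q₁.divMonomial s with hB
  set R1 : MvPolynomial (Fin 4) ℝ := Q₁.modMonomial s with hR1
  set C2 : MvPolynomial (Fin 4) ℝ := Q₂.divMonomial s with hC2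
  set R2 : MvPolynomial (Fin 4) ℝ := Q₂.modMonomial s with hR2
  have hQ1 : monomial s (1 : ℝ) * B + R1 = Q₁ := divMonomial_add_modMonomial Q₁ s
  have hQ2 : monomial s (1 : ℝ) * C2 + R2 = Q₂ := divMonomial_add_modMonomial Q₂ s
  rw [← hmonk] at hQ1 hQ2
  -- the "reduced" relation
  have hDdvd : R1 * X i ^ n + R2 * X j ^ n
      = monomial s (1 : ℝ) * (-Q₃ - B * X i ^ n - C2 * X j ^ n) := by
    rw [← hmonk]
    linear_combination (X i ^ n) * hQ1 + (X j ^ n) * hQ2 + h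
  have hD : R1 * X i ^ n + R2 * X j ^ n = 0 := by
    refine aux_zero ⟨_, hDdvd⟩ ?_
    intro m hm
    have hik' : s ≤ m - Finsupp.single i n := by
      intro x
      by_cases hx : x = k
      · rw [hx]
        have := hm k
        simp only [hs, Finsupp.single_eq_same, Finsupp.tsub_apply,
          Finsupp.single_eq_of_ne' hik] at this ⊢
        omega
      · simp [hs, Finsupp.single_eq_of_ne' (Ne.symm hx)]
    have hjk' : s ≤ m - Finsupp.single j n := by
      intro x
      by_cases hx : x = k
      · rw [hx]
        have := hm k
        simp only [hs, Finsupp.single_eq_same, Finsupp.tsub_apply,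
          Finsupp.single_eq_of_ne' hjk] at this ⊢
        omega
      · simp [hs, Finsupp.single_eq_of_ne' (Ne.symm hx)]
    rw [coeff_add, X_pow_eq_monomial, X_pow_eq_monomial, coeff_mul_monomial',
      coeff_mul_monomial']
    split_ifs with h1 h2 h2
    · rw [hR1, hR2, coeff_modMonomial_of_le _ hik', coeff_modMonomial_of_le _ hjk']
      ring
    · rw [hR1, coeff_modMonomial_of_le _ hik']
      ring
    · rw [hR2, coeff_modMonomial_of_le _ hjk']
      ring
    · ring
  -- extract A
  have hR1dvd : monomial (Finsupp.single j n) (1 : ℝ) ∣ R1 := by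
    refine aux_dvd_of_mul hij (W := -R2) ?_
    rw [← X_pow_eq_monomial]
    linear_combination hD
  obtain ⟨A, hA⟩ := hR1dvd
  rw [← X_pow_eq_monomial] at hA
  have hQ1' : Q₁ = A * X j ^ n + B * X k ^ n := by
    linear_combination hA - hQ1
  -- extract C'
  have hdvd2 : (Q₂ + A * X i ^ n) * X j ^ n
      = monomial s (1 : ℝ) * (-(Q₃ + B * X i ^ n)) := by
    rw [← hmonk]
    linear_combination h - (X i ^ n) * hQ1'
  obtain ⟨C', hC'⟩ := aux_dvd_of_mul hjk hdvd2
  rw [← X_pow_eq_monomial] at hC'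
  have hQ2' : Q₂ = -A * X i ^ n + C' * X k ^ n := by
    linear_combination hC'
  refine ⟨A, B, C', hQ1', hQ2', ?_⟩
  have hXk : (X k : MvPolynomial (Fin 4) ℝ) ^ n ≠ 0 :=
    pow_ne_zero _ (X_ne_zero k)
  have : (Q₃ - (-B * X i ^ n - C' * X j ^ n)) * X k ^ n = 0 := by
    linear_combination h - (X i ^ n) * hQ1' - (X j ^ n) * hQ2'
  rcases mul_eq_zero.mp this with h0 | h0
  · exact sub_eq_zero.mp h0
  · exact absurd h0 hXk
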